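/- arXiv:0912.0052 — 3 statements merged into one kernel-verified Lean document; each statement's English description precedes it below -/
import Mathlib

section
/- A practical number n is a Zumkeller number if and only if σ(n) is even. -/
/-- A positive integer `n` is a Zumkeller number if the set of its positive divisors
can be partitioned into two disjoint parts whose sums are equal. -/
def Zumkeller (n : ℕ) : Prop :=
  0 < n ∧ ∃ A ⊆ n.divisors, ∑ d ∈ A, d = ∑ d ∈ n.divisors \ A, d

/-- A positive integer `n` is a half-Zumkeller number if the set of its positive proper
divisors can be partitioned into two disjoint parts whose sums are equal. -/
def HalfZumkeller (n : ℕ) : Prop :=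
  0 < n ∧ ∃ A ⊆ n.properDivisors, ∑ d ∈ A, d = ∑ d ∈ n.properDivisors \ A, d

/-- A positive integer `n` is a practical number if every positive integer less than `n`
can be written as a sum of distinct positive divisors of `n`. -/
def Practical (n : ℕ) : Prop :=
  0 < n ∧ ∀ m : ℕ, 0 < m → m < n → ∃ S ⊆ n.divisors, m = ∑ d ∈ S, d

/-- A positive integer `n` is a quasi-practical number if every positive integer
`m ≤ σ(n) - n` can be written as a sum of distinct positive divisors of `n`
excluding `n` itself. -/
def QuasiPractical (n : ℕ) : Prop :=
  0 < n ∧ ∀ m : ℕ, 0 < m → m ≤ (∑ d ∈ n.divisors, d) - n →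
    ∃ S ⊆ n.properDivisors, m = ∑ d ∈ S, d


lemma greedy (D : Finset ℕ) (hD : ∀ d ∈ D, d ≤ 1 + ∑ e ∈ D.filter (· < d), e) :
    ∀ m ≤ ∑ d ∈ D, d, ∃ S ⊆ D, m = ∑ d ∈ S, d := by
  induction D using Finset.strongInduction with
  | _ D ih =>
    intro m hm
    rcases Nat.eq_zero_or_pos m with rfl | hm0
    · exact ⟨∅, Finset.empty_subset _, by simp⟩
    have hne : D.Nonempty := by
      by_contra h
      rw [Finset.not_nonempty_iff_eq_empty] at h
      subst h; simp at hm; omega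
    obtain ⟨d, hd, hmax⟩ := D.exists_max_image id hne
    simp only [id] at hmax
    by_cases hmd : d ≤ m
    · have hss : D.erase d ⊂ D := Finset.erase_ssubset hd
      have hsum := Finset.add_sum_erase D id hd
      simp only [id] at hsum
      have hcomp : ∀ e ∈ D.erase d, e ≤ 1 + ∑ x ∈ (D.erase d).filter (· < e), x := by
        intro e he
        have he' := Finset.mem_of_mem_erase he
        have : (D.erase d).filter (· < e) = D.filter (· < e) := by
          ext x
          simp only [Finset.mem_filter, Finset.mem_erase]
          constructor
          · rintro ⟨⟨_, hx⟩, hlt⟩; exact ⟨hx, hlt⟩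
          · rintro ⟨hx, hlt⟩
            refine ⟨⟨fun h => ?_, hx⟩, hlt⟩
            subst h
            exact absurd (lt_of_lt_of_le hlt (hmax e he')) (lt_irrefl _)
        rw [this]; exact hD e he'
      obtain ⟨S, hS, hSsum⟩ := ih _ hss hcomp (m - d) (by omega)
      refine ⟨insert d S, ?_, ?_⟩
      · exact Finset.insert_subset hd (hS.trans (Finset.erase_subset _ _))
      · have hdS : d ∉ S := fun h => (Finset.mem_erase.mp (hS h)).1 rfl
        rw [Finset.sum_insert hdS]; omega
    · push_neg at hmd
      have hdD : d ∉ D.filter (· < d) := by simp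
      have hss : D.filter (· < d) ⊂ D :=
        Finset.ssubset_iff_of_subset (Finset.filter_subset _ _) |>.mpr ⟨d, hd, hdD⟩
      have hcomp : ∀ e ∈ D.filter (· < d), e ≤ 1 + ∑ x ∈ (D.filter (· < d)).filter (· < e), x := by
        intro e he
        obtain ⟨heD, hed⟩ := Finset.mem_filter.mp he
        have : (D.filter (· < d)).filter (· < e) = D.filter (· < e) := by
          ext x
          simp only [Finset.mem_filter]
          constructor
          · rintro ⟨⟨hx, _⟩, h2⟩; exact ⟨hx, h2⟩
          · rintro ⟨hx, h2⟩
            exact ⟨⟨hx, lt_trans h2 (by simpa using hed)⟩, h2⟩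
        rw [this]; exact hD e heD
      have hle : m ≤ ∑ x ∈ D.filter (· < d), x := by
        have := hD d hd; omega
      obtain ⟨S, hS, hSsum⟩ := ih _ hss hcomp m hle
      exact ⟨S, hS.trans (Finset.filter_subset _ _), hSsum⟩

lemma practical_complete {n : ℕ} (hn : Practical n) :
    ∀ d ∈ n.properDivisors, d ≤ 1 + ∑ e ∈ n.properDivisors.filter (· < d), e := by
  intro d hd
  obtain ⟨hdvd, hdn⟩ := Nat.mem_properDivisors.mp hd
  have hd0 : 0 < d := Nat.pos_of_dvd_of_pos hdvd hn.1
  rcases Nat.eq_or_lt_of_le hd0 with h1 | h1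
  · omega
  · obtain ⟨S, hS, hSsum⟩ := hn.2 (d - 1) (by omega) (by omega)
    have hSsub : S ⊆ n.properDivisors.filter (· < d) := by
      intro s hs
      have hsd : s ∈ n.divisors := hS hs
      have hsle : s ≤ d - 1 := by
        rw [hSsum]
        exact Finset.single_le_sum (fun i _ => Nat.zero_le i) hs
      rw [Finset.mem_filter, Nat.mem_properDivisors]
      exact ⟨⟨(Nat.mem_divisors.mp hsd).1, by omega⟩, by omega⟩
    have h2 : ∑ s ∈ S, s ≤ ∑ e ∈ n.properDivisors.filter (· < d), e :=
      Finset.sum_le_sum_of_subset hSsub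
    omega

theorem stmt2 (n : ℕ) (hn : Practical n) :
    Zumkeller n ↔ Even (∑ d ∈ n.divisors, d) := by
  have hn0 : 0 < n := hn.1
  have hnd : n ∈ n.divisors := Nat.mem_divisors_self n hn0.ne'
  have hsplit : ∑ d ∈ n.properDivisors, d + n = ∑ d ∈ n.divisors, d := by
    rw [← Nat.sum_divisors_eq_sum_properDivisors_add_self]
  constructor
  · rintro ⟨-, A, hA, hsum⟩
    have := Finset.sum_sdiff hA (f := id)
    simp only [id] at this
    exact ⟨∑ d ∈ A, d, by omega⟩
  · intro he
    obtain ⟨k, hk⟩ := he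
    rcases Nat.eq_or_lt_of_le hn0 with h1 | h1
    · exfalso
      rw [← h1, Nat.divisors_one, Finset.sum_singleton] at hk
      omega
    · -- n ≥ 2
      have hpd : n - 1 ≤ ∑ d ∈ n.properDivisors, d := by
        obtain ⟨S, hS, hSsum⟩ := hn.2 (n - 1) (by omega) (by omega)
        have hSsub : S ⊆ n.properDivisors := by
          intro s hs
          have hsle : s ≤ n - 1 := by
            rw [hSsum]; exact Finset.single_le_sum (fun i _ => Nat.zero_le i) hs
          rw [Nat.mem_properDivisors]
          exact ⟨(Nat.mem_divisors.mp (hS hs)).1, by omega⟩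
        have h2 : ∑ s ∈ S, s ≤ ∑ e ∈ n.properDivisors, e :=
          Finset.sum_le_sum_of_subset hSsub
        omega
      have hkn : n ≤ k := by omega
      obtain ⟨S, hS, hSsum⟩ := greedy n.properDivisors (practical_complete hn) (k - n) (by omega)
      have hnS : n ∉ S := fun h => (Nat.mem_properDivisors.mp (hS h)).2.ne rfl
      refine ⟨hn0, insert n S, ?_, ?_⟩
      · exact Finset.insert_subset hnd (hS.trans (Nat.properDivisors_subset_divisors))
      · have hAsub : insert n S ⊆ n.divisors :=
          Finset.insert_subset hnd (hS.trans (Nat.properDivisors_subset_divisors))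
        have h1' := Finset.sum_sdiff hAsub (f := id)
        simp only [id] at h1'
        rw [Finset.sum_insert hnS] at h1' ⊢
        omega
end

section
/- If n is a practical number, p is a prime with gcd(n, p) = 1, l is a positive integer, and σ(n) is odd, then n·p^l is a half-Zumkeller number if and only if p ≤ σ(n) and l is odd. -/
section Aux

open Finset

lemma complete_rep : ∀ (F : Finset ℕ),
    (∀ d ∈ F, d ≤ 1 + ∑ e ∈ F.filter (· < d), e) →
    ∀ j ≤ ∑ e ∈ F, e, ∃ S ⊆ F, ∑ d ∈ S, d = j := by
  intro F
  induction F using Finset.strongInduction with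
  | _ F ih =>
    intro hF j hj
    rcases F.eq_empty_or_nonempty with rfl | hne
    · simp only [Finset.sum_empty, Nat.le_zero] at hj
      exact ⟨∅, Finset.Subset.refl _, by simp [hj]⟩
    · set M := F.max' hne with hM
      have hMF : M ∈ F := F.max'_mem hne
      have hsub : F.erase M ⊂ F := Finset.erase_ssubset hMF
      have hcond : ∀ d ∈ F.erase M, d ≤ 1 + ∑ e ∈ (F.erase M).filter (· < d), e := by
        intro d hd
        have hdF := Finset.mem_of_mem_erase hd
        have heq : F.filter (· < d) = (F.erase M).filter (· < d) := by
          ext e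
          simp only [Finset.mem_filter, Finset.mem_erase]
          constructor
          · rintro ⟨heF, hlt⟩
            refine ⟨⟨?_, heF⟩, hlt⟩
            rintro rfl
            exact absurd (F.le_max' d hdF) (not_le.2 hlt)
          · rintro ⟨⟨_, heF⟩, hlt⟩; exact ⟨heF, hlt⟩
        rw [← heq]; exact hF d hdF
      have hsplit : ∑ e ∈ F.erase M, e + M = ∑ e ∈ F, e := Finset.sum_erase_add F _ hMF
      by_cases hle : j ≤ ∑ e ∈ F.erase M, e
      · obtain ⟨S, hS, hsum⟩ := ih _ hsub hcond j hle
        exact ⟨S, hS.trans (Finset.erase_subset _ _), hsum⟩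
      · push_neg at hle
        have hfsub : F.filter (· < M) ⊆ F.erase M := by
          intro e he
          simp only [Finset.mem_filter] at he
          exact Finset.mem_erase.2 ⟨Nat.ne_of_lt he.2, he.1⟩
        have hMle : M ≤ 1 + ∑ e ∈ F.erase M, e :=
          (hF M hMF).trans (Nat.add_le_add_left (Finset.sum_le_sum_of_subset hfsub) 1)
        have hMj : M ≤ j := by omega
        obtain ⟨S, hS, hsum⟩ := ih _ hsub hcond (j - M) (by omega)
        refine ⟨insert M S, ?_, ?_⟩
        · intro x hx
          rcases Finset.mem_insert.1 hx with rfl | hx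
          · exact hMF
          · exact Finset.erase_subset _ _ (hS hx)
        · rw [Finset.sum_insert (fun hMS => (Finset.mem_erase.1 (hS hMS)).1 rfl)]
          omega

lemma rep_of_practical {n : ℕ} (hn : Practical n) :
    ∀ j ≤ ∑ d ∈ n.divisors, d, ∃ S ⊆ n.divisors, ∑ d ∈ S, d = j := by
  apply complete_rep
  intro d hd
  obtain ⟨hdvd, hn0⟩ := Nat.mem_divisors.1 hd
  have hd1 : 1 ≤ d := Nat.pos_of_mem_divisors hd
  rcases Nat.eq_or_lt_of_le hd1 with h1 | h2
  · omega
  · have hdn : d ≤ n := Nat.le_of_dvd hn.1 hdvd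
    obtain ⟨S, hS, hsum⟩ := hn.2 (d - 1) (by omega) (by omega)
    have hSsub : S ⊆ n.divisors.filter (· < d) := by
      intro x hx
      refine Finset.mem_filter.2 ⟨hS hx, ?_⟩
      have : x ≤ ∑ e ∈ S, e := Finset.single_le_sum (fun i _ => Nat.zero_le i) hx
      omega
    have := Finset.sum_le_sum_of_subset (f := id) hSsub
    simp only [id_eq] at this
    omega

lemma quasi_rep {N : ℕ} (hN : 0 < N)
    (hrep : ∀ j ≤ ∑ d ∈ N.divisors, d, ∃ S ⊆ N.divisors, ∑ d ∈ S, d = j) :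
    ∀ j ≤ ∑ d ∈ N.properDivisors, d, ∃ S ⊆ N.properDivisors, ∑ d ∈ S, d = j := by
  apply complete_rep
  intro d hd
  obtain ⟨hdvd, hdlt⟩ := Nat.mem_properDivisors.1 hd
  have hd1 : 1 ≤ d := Nat.pos_of_dvd_of_pos hdvd hN
  rcases Nat.eq_or_lt_of_le hd1 with h1 | h2
  · omega
  · have hNle : N ≤ ∑ e ∈ N.divisors, e :=
      Finset.single_le_sum (fun i _ => Nat.zero_le i) (Nat.mem_divisors_self N hN.ne')
    obtain ⟨S, hS, hsum⟩ := hrep (d - 1) (by omega)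
    have hSsub : S ⊆ N.properDivisors.filter (· < d) := by
      intro x hx
      have hxle : x ≤ ∑ e ∈ S, e := Finset.single_le_sum (fun i _ => Nat.zero_le i) hx
      exact Finset.mem_filter.2 ⟨Nat.mem_properDivisors.2
        ⟨(Nat.mem_divisors.1 (hS hx)).1, by omega⟩, by omega⟩
    have := Finset.sum_le_sum_of_subset (f := id) hSsub
    simp only [id_eq] at this
    omega

lemma geom_nat (q : ℕ) : ∀ k : ℕ, q * (∑ i ∈ Finset.range k, (q + 1) ^ i) + 1 = (q + 1) ^ k := by
  intro k
  induction k with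
  | zero => simp
  | succ k ihk =>
    rw [Finset.sum_range_succ, pow_succ]
    ring_nf
    ring_nf at ihk
    nlinarith [ihk]

lemma sum_divisors_prime_pow' {p : ℕ} (hp : p.Prime) (k : ℕ) :
    ∑ d ∈ (p ^ k).divisors, d = ∑ i ∈ Finset.range (k + 1), p ^ i := by
  rw [← ArithmeticFunction.sigma_one_apply, ArithmeticFunction.sigma_one_apply_prime_pow hp]

lemma rep_mul_pp {n p : ℕ} (hp : p.Prime) (hcop : Nat.Coprime n p) (hn : 0 < n)
    (hrep : ∀ j ≤ ∑ d ∈ n.divisors, d, ∃ S ⊆ n.divisors, ∑ d ∈ S, d = j)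
    (hple : p ≤ (∑ d ∈ n.divisors, d) + 1) :
    ∀ l : ℕ, ∀ j ≤ ∑ d ∈ (n * p ^ l).divisors, d,
      ∃ S ⊆ (n * p ^ l).divisors, ∑ d ∈ S, d = j := by
  intro l
  induction l with
  | zero => simpa using hrep
  | succ l ihl =>
    intro j hj
    have hP : 0 < p ^ (l + 1) := Nat.pow_pos hp.pos
    have hNl : 0 < n * p ^ l := Nat.mul_pos hn (Nat.pow_pos hp.pos)
    have hNl1 : 0 < n * p ^ (l + 1) := Nat.mul_pos hn hP
    have hcopl : Nat.Coprime n (p ^ (l + 1)) := hcop.pow_right _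
    have hcopl' : Nat.Coprime n (p ^ l) := hcop.pow_right _
    have hσ1 : ∑ d ∈ (n * p ^ (l + 1)).divisors, d
        = (∑ d ∈ n.divisors, d) * ∑ d ∈ (p ^ (l + 1)).divisors, d :=
      hcopl.sum_divisors_mul
    have hσ0 : ∑ d ∈ (n * p ^ l).divisors, d
        = (∑ d ∈ n.divisors, d) * ∑ d ∈ (p ^ l).divisors, d :=
      hcopl'.sum_divisors_mul
    have hstep : ∑ d ∈ (p ^ (l + 1)).divisors, d
        = (∑ d ∈ (p ^ l).divisors, d) + p ^ (l + 1) := by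
      rw [sum_divisors_prime_pow' hp, sum_divisors_prime_pow' hp, Finset.sum_range_succ]
    set A := ∑ d ∈ n.divisors, d with hA
    set B := ∑ d ∈ (p ^ l).divisors, d with hB
    rw [hσ1, hstep, Nat.mul_add] at hj
    -- hj : j ≤ A * B + A * p ^ (l + 1)
    have hPle : p ^ (l + 1) ≤ A * B + 1 := by
      have hp1 : 1 ≤ p := hp.pos
      have hgeom := geom_nat (p - 1) (l + 1)
      simp only [show p - 1 + 1 = p from by omega] at hgeom
      have h1 : (p - 1) * (∑ i ∈ Finset.range (l + 1), p ^ i)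
          ≤ A * (∑ i ∈ Finset.range (l + 1), p ^ i) :=
        Nat.mul_le_mul_right _ (by omega)
      rw [hB, sum_divisors_prime_pow' hp]
      omega
    have key : ∀ q r : ℕ, q ≤ A → r ≤ ∑ d ∈ (n * p ^ l).divisors, d →
        q * p ^ (l + 1) + r = j →
        ∃ S ⊆ (n * p ^ (l + 1)).divisors, ∑ d ∈ S, d = j := by
      intro q r hqA hr hqr
      obtain ⟨T, hT, hTsum⟩ := ihl r hr
      obtain ⟨S0, hS0, hS0sum⟩ := hrep q hqA
      have hS1sum : ∑ d ∈ S0.image (· * p ^ (l + 1)), d = q * p ^ (l + 1) := by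
        rw [Finset.sum_image (fun a _ b _ h => Nat.eq_of_mul_eq_mul_right hP h),
          ← Finset.sum_mul, hS0sum]
      have hS1sub : S0.image (· * p ^ (l + 1)) ⊆ (n * p ^ (l + 1)).divisors := by
        intro x hx
        obtain ⟨d, hd, rfl⟩ := Finset.mem_image.1 hx
        exact Nat.mem_divisors.2
          ⟨mul_dvd_mul (Nat.mem_divisors.1 (hS0 hd)).1 dvd_rfl, hNl1.ne'⟩
      have hTsub : T ⊆ (n * p ^ (l + 1)).divisors := by
        refine hT.trans (Nat.divisors_subset_of_dvd hNl1.ne' ?_)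
        exact mul_dvd_mul_left n (pow_dvd_pow p (Nat.le_succ l))
      have hdisj : Disjoint (S0.image (· * p ^ (l + 1))) T := by
        rw [Finset.disjoint_left]
        intro x hx hxT
        obtain ⟨d, hd, rfl⟩ := Finset.mem_image.1 hx
        have hxdvd : d * p ^ (l + 1) ∣ n * p ^ l := (Nat.mem_divisors.1 (hT hxT)).1
        have hPdvd : p ^ (l + 1) ∣ n * p ^ l :=
          dvd_trans (dvd_mul_left _ d) hxdvd
        have h2 : p ^ (l + 1) ∣ p ^ l := (Nat.Coprime.dvd_of_dvd_mul_left
          ((hcopl.symm : Nat.Coprime (p ^ (l+1)) n)) hPdvd)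
        have h3 := Nat.le_of_dvd (Nat.pow_pos hp.pos) h2
        have h4 : p ^ l < p ^ (l + 1) := Nat.pow_lt_pow_right hp.one_lt (Nat.lt_succ_self l)
        omega
      refine ⟨S0.image (· * p ^ (l + 1)) ∪ T, Finset.union_subset hS1sub hTsub, ?_⟩
      rw [Finset.sum_union hdisj, hS1sum, hTsum, hqr]
    rcases le_or_gt (j / p ^ (l + 1)) A with hcase | hcase
    · refine key (j / p ^ (l + 1)) (j % p ^ (l + 1)) hcase ?_ ?_
      · have hmod : j % p ^ (l + 1) < p ^ (l + 1) := Nat.mod_lt _ hP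
        rw [hσ0]
        omega
      · rw [Nat.mul_comm]
        exact Nat.div_add_mod j _
    · refine key A (j - A * p ^ (l + 1)) le_rfl ?_ ?_
      · rw [hσ0]; omega
      · have h1 : A * p ^ (l + 1) ≤ (j / p ^ (l + 1)) * p ^ (l + 1) :=
          Nat.mul_le_mul_right _ (le_of_lt hcase)
        have h2 : (j / p ^ (l + 1)) * p ^ (l + 1) ≤ j := Nat.div_mul_le_self j _
        omega

lemma practical_two_dvd {n : ℕ} (hn : Practical n) (h2 : 2 ≤ n) : 2 ∣ n := by
  by_contra h
  have hne : n ≠ 2 := fun e => h (e ▸ dvd_rfl)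
  obtain ⟨S, hS, hsum⟩ := hn.2 2 two_pos (by omega)
  have hone : ∀ d ∈ S, d = 1 := by
    intro d hd
    have hdvd := (Nat.mem_divisors.1 (hS hd)).1
    have hdpos : 0 < d := Nat.pos_of_mem_divisors (hS hd)
    have hdle : d ≤ ∑ e ∈ S, e := Finset.single_le_sum (fun i _ => Nat.zero_le i) hd
    have : d = 1 ∨ d = 2 := by omega
    rcases this with h1 | h1
    · exact h1
    · exact absurd (h1 ▸ hdvd) h
  have hsub : S ⊆ {1} := fun d hd => Finset.mem_singleton.2 (hone d hd)
  have := Finset.sum_le_sum_of_subset (f := id) hsub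
  simp only [id_eq, Finset.sum_singleton] at this
  omega

lemma sigma_pp_mod_two' {p : ℕ} (hp : p.Prime) (hodd : Odd p) (l : ℕ) :
    (∑ d ∈ (p ^ l).divisors, d) % 2 = (l + 1) % 2 := by
  rw [sum_divisors_prime_pow' hp l]
  have h1 : ∀ i ∈ Finset.range (l + 1), p ^ i % 2 = 1 :=
    fun i _ => Nat.odd_iff.1 (hodd.pow)
  calc (∑ i ∈ Finset.range (l + 1), p ^ i) % 2
      = (∑ i ∈ Finset.range (l + 1), p ^ i % 2) % 2 := Finset.sum_nat_mod _ _ _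
    _ = (∑ _i ∈ Finset.range (l + 1), 1) % 2 := by rw [Finset.sum_congr rfl h1]
    _ = (l + 1) % 2 := by simp

lemma filter_proper {n p l : ℕ} (hp : p.Prime) (hcop : Nat.gcd n p = 1)
    (hn : 0 < n) (hl : 0 < l) :
    (n * p ^ l).properDivisors.filter (fun x => ¬ p ∣ x) = n.divisors := by
  have hpl : 1 < p ^ l := Nat.one_lt_pow hl.ne' hp.one_lt
  ext x
  simp only [Finset.mem_filter, Nat.mem_properDivisors, Nat.mem_divisors]
  constructor
  · rintro ⟨⟨hxdvd, _⟩, hnd⟩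
    have hcx : Nat.Coprime p x := (Nat.Prime.coprime_iff_not_dvd hp).2 hnd
    exact ⟨Nat.Coprime.dvd_of_dvd_mul_right (hcx.symm.pow_right l) hxdvd, hn.ne'⟩
  · rintro ⟨hxdvd, -⟩
    refine ⟨⟨hxdvd.mul_right _, ?_⟩, ?_⟩
    · have hx : x ≤ n := Nat.le_of_dvd hn hxdvd
      have : n < n * p ^ l := (Nat.lt_mul_iff_one_lt_right hn).2 hpl
      omega
    · intro hpx
      have h1 : p ∣ Nat.gcd n p := Nat.dvd_gcd (hpx.trans hxdvd) dvd_rfl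
      rw [hcop] at h1
      have h2 := Nat.eq_one_of_dvd_one h1
      have h3 := hp.one_lt
      omega

lemma sum_mod_p (p : ℕ) (X : Finset ℕ) :
    (∑ x ∈ X, x) % p = (∑ x ∈ X.filter (fun x => ¬ p ∣ x), x) % p := by
  have hsplit := Finset.sum_filter_add_sum_filter_not X (fun x => ¬ p ∣ x) (fun x => x)
  have hdvd : p ∣ ∑ x ∈ X.filter (fun x => ¬¬ p ∣ x), x :=
    Finset.dvd_sum (fun x hx => not_not.1 (Finset.mem_filter.1 hx).2)
  obtain ⟨k, hk⟩ := hdvd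
  rw [← hsplit, hk, Nat.add_mul_mod_self_left]

end Aux

theorem stmt5 (n p l : ℕ) (hn : Practical n) (hp : p.Prime) (hcop : Nat.gcd n p = 1)
    (hl : 0 < l) (hsigma : Odd (∑ d ∈ n.divisors, d)) :
    HalfZumkeller (n * p ^ l) ↔ p ≤ (∑ d ∈ n.divisors, d) ∧ Odd l := by
  have hn0 : 0 < n := hn.1
  have hNpos : 0 < n * p ^ l := Nat.mul_pos hn0 (Nat.pow_pos hp.pos)
  have hσmul : ∑ d ∈ (n * p ^ l).divisors, d
      = (∑ d ∈ n.divisors, d) * ∑ d ∈ (p ^ l).divisors, d :=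
    Nat.Coprime.sum_divisors_mul (Nat.Coprime.pow_right l hcop)
  have hinsert : ∑ d ∈ (n * p ^ l).divisors, d
      = n * p ^ l + ∑ d ∈ (n * p ^ l).properDivisors, d := by
    rw [← Nat.insert_self_properDivisors hNpos.ne',
      Finset.sum_insert Nat.self_notMem_properDivisors]
  have hσn1 : (∑ d ∈ n.divisors, d) % 2 = 1 := Nat.odd_iff.1 hsigma
  -- helper : n = 1 is impossible when p ≤ σ n
  have hone : p ≤ ∑ d ∈ n.divisors, d → 2 ≤ n := by
    intro hple
    by_contra hlt
    have hn1 : n = 1 := by omega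
    subst hn1
    simp only [Nat.divisors_one, Finset.sum_singleton] at hple
    have := hp.two_le
    omega
  constructor
  · rintro ⟨-, A, hA, hsum⟩
    have htot : ∑ d ∈ (n * p ^ l).properDivisors \ A, d + ∑ d ∈ A, d
        = ∑ d ∈ (n * p ^ l).properDivisors, d := Finset.sum_sdiff hA
    have hple : p ≤ ∑ d ∈ n.divisors, d := by
      by_contra hgt
      push_neg at hgt
      have hfa : A.filter (fun x => ¬ p ∣ x) ∪
          ((n * p ^ l).properDivisors \ A).filter (fun x => ¬ p ∣ x) = n.divisors := by
        rw [← Finset.filter_union, Finset.union_sdiff_of_subset hA,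
          filter_proper hp hcop hn0 hl]
      have hdisj : Disjoint (A.filter (fun x => ¬ p ∣ x))
          (((n * p ^ l).properDivisors \ A).filter (fun x => ¬ p ∣ x)) :=
        Disjoint.mono (Finset.filter_subset _ _) (Finset.filter_subset _ _)
          Finset.disjoint_sdiff
      have hsum2 : (∑ x ∈ A.filter (fun x => ¬ p ∣ x), x) +
          (∑ x ∈ ((n * p ^ l).properDivisors \ A).filter (fun x => ¬ p ∣ x), x)
          = ∑ d ∈ n.divisors, d := by
        rw [← Finset.sum_union hdisj, hfa]
      have hma := sum_mod_p p A
      have hmc := sum_mod_p p ((n * p ^ l).properDivisors \ A)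
      rw [hsum] at hma
      have ha0 : (∑ x ∈ A.filter (fun x => ¬ p ∣ x), x) % p
          = ∑ x ∈ A.filter (fun x => ¬ p ∣ x), x := Nat.mod_eq_of_lt (by omega)
      have hc0 : (∑ x ∈ ((n * p ^ l).properDivisors \ A).filter (fun x => ¬ p ∣ x), x) % p
          = ∑ x ∈ ((n * p ^ l).properDivisors \ A).filter (fun x => ¬ p ∣ x), x :=
        Nat.mod_eq_of_lt (by omega)
      omega
    refine ⟨hple, ?_⟩
    have hn2 : 2 ≤ n := hone hple
    have h2n : 2 ∣ n := practical_two_dvd hn hn2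
    have hp2 : p ≠ 2 := by
      rintro rfl
      have h1 : 2 ∣ Nat.gcd n 2 := Nat.dvd_gcd h2n dvd_rfl
      rw [hcop] at h1
      exact absurd (Nat.eq_one_of_dvd_one h1) (by omega)
    have hpodd : Odd p := hp.odd_of_ne_two hp2
    have h3 := sigma_pp_mod_two' hp hpodd l
    have h2N : 2 ∣ n * p ^ l := h2n.mul_right _
    obtain ⟨k, hk⟩ := h2N
    have heven : ((∑ d ∈ n.divisors, d) * ∑ d ∈ (p ^ l).divisors, d) % 2 = 0 := by
      omega
    have hevenpl : Even (∑ d ∈ (p ^ l).divisors, d) := by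
      rcases (Nat.even_mul.1 (Nat.even_iff.2 heven)) with h | h
      · exact absurd (Nat.even_iff.1 h) (by omega)
      · exact h
    have := Nat.even_iff.1 hevenpl
    exact Nat.odd_iff.2 (by omega)
  · rintro ⟨hple, hlodd⟩
    have hn2 : 2 ≤ n := hone hple
    have h2n : 2 ∣ n := practical_two_dvd hn hn2
    have hp2 : p ≠ 2 := by
      rintro rfl
      have h1 : 2 ∣ Nat.gcd n 2 := Nat.dvd_gcd h2n dvd_rfl
      rw [hcop] at h1
      exact absurd (Nat.eq_one_of_dvd_one h1) (by omega)
    have hpodd : Odd p := hp.odd_of_ne_two hp2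
    have h3 := sigma_pp_mod_two' hp hpodd l
    have hl1 : l % 2 = 1 := Nat.odd_iff.1 hlodd
    obtain ⟨k, hk⟩ := h2n.mul_right (p ^ l)
    have hrepN := rep_mul_pp hp hcop hn0 (rep_of_practical hn) (by omega) l
    have hq := quasi_rep hNpos hrepN
    have ht2 : (∑ d ∈ (n * p ^ l).properDivisors, d) % 2 = 0 := by
      have hplmod : (∑ d ∈ (p ^ l).divisors, d) % 2 = 0 := by omega
      have : ((∑ d ∈ n.divisors, d) * ∑ d ∈ (p ^ l).divisors, d) % 2 = 0 :=
        Nat.even_iff.1 (Even.mul_left (Nat.even_iff.2 hplmod) _)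
      omega
    obtain ⟨A, hA, hAsum⟩ := hq ((∑ d ∈ (n * p ^ l).properDivisors, d) / 2)
      (Nat.div_le_self _ _)
    refine ⟨hNpos, A, hA, ?_⟩
    have hsd : ∑ d ∈ (n * p ^ l).properDivisors \ A, d + ∑ d ∈ A, d
        = ∑ d ∈ (n * p ^ l).properDivisors, d := Finset.sum_sdiff hA
    omega
end

section
/- Every practical number is a quasi-practical number. -/
lemma complete_seq (T : Finset ℕ) :
    (∀ d ∈ T, d ≤ 1 + ∑ e ∈ T.filter (· < d), e) →
    ∀ m, m ≤ ∑ d ∈ T, d → ∃ S ⊆ T, ∑ d ∈ S, d = m := by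
  induction T using Finset.strongInduction with
  | _ T ih =>
    intro hT m hm
    rcases T.eq_empty_or_nonempty with rfl | hne
    · simp at hm; exact ⟨∅, by simp [hm]⟩
    set d := T.max' hne with hd
    have hdT : d ∈ T := T.max'_mem hne
    set T' := T.erase d with hT'def
    have hsub : T' ⊂ T := Finset.erase_ssubset hdT
    have hfil : ∀ e, e ∈ T → T'.filter (· < e) = T.filter (· < e) := by
      intro e he
      rw [hT'def, Finset.filter_erase, Finset.erase_eq_of_notMem]
      simp only [Finset.mem_filter]
      rintro ⟨-, hlt⟩
      exact absurd (T.le_max' e he) (by omega)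
    have hT'h : ∀ e ∈ T', e ≤ 1 + ∑ x ∈ T'.filter (· < e), x := by
      intro e he
      rw [hfil e (Finset.mem_of_mem_erase he)]
      exact hT e (Finset.mem_of_mem_erase he)
    have hsum : ∑ x ∈ T', x + d = ∑ x ∈ T, x := Finset.sum_erase_add T _ hdT
    by_cases hmd : d ≤ m
    · obtain ⟨S, hS, hSsum⟩ := ih T' hsub hT'h (m - d) (by omega)
      have hdS : d ∉ S := fun h => (Finset.mem_erase.mp (hS h)).1 rfl
      refine ⟨insert d S, ?_, ?_⟩
      · exact Finset.insert_subset hdT (hS.trans (Finset.erase_subset _ _))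
      · rw [Finset.sum_insert hdS, hSsum]; omega
    · have h1 : m ≤ ∑ x ∈ T.filter (· < d), x := by
        have := hT d hdT; omega
      have h2 : T.filter (· < d) ⊆ T' := by
        intro x hx
        simp only [Finset.mem_filter] at hx
        exact Finset.mem_erase.mpr ⟨by omega, hx.1⟩
      have h3 : m ≤ ∑ x ∈ T', x :=
        h1.trans (Finset.sum_le_sum_of_subset h2)
      obtain ⟨S, hS, hSsum⟩ := ih T' hsub hT'h m h3
      exact ⟨S, hS.trans (Finset.erase_subset _ _), hSsum⟩

theorem stmt7 (n : ℕ) (hn : Practical n) : QuasiPractical n := by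
  obtain ⟨hn0, hp⟩ := hn
  refine ⟨hn0, fun m hm0 hm => ?_⟩
  have hsum : ∑ d ∈ n.divisors, d = ∑ d ∈ n.properDivisors, d + n :=
    Nat.sum_divisors_eq_sum_properDivisors_add_self
  have key : ∀ d ∈ n.properDivisors, d ≤ 1 + ∑ e ∈ n.properDivisors.filter (· < d), e := by
    intro d hd
    obtain ⟨hdvd, hdlt⟩ := Nat.mem_properDivisors.mp hd
    by_cases hd1 : d ≤ 1
    · omega
    · obtain ⟨S, hS, hSsum⟩ := hp (d - 1) (by omega) (by omega)
      have hSsub : S ⊆ n.properDivisors.filter (· < d) := by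
        intro e he
        have heT := hS he
        have hepos : 0 < e := Nat.pos_of_mem_divisors heT
        have hele : e ≤ d - 1 := by
          rw [hSsum]
          exact Finset.single_le_sum (fun i _ => Nat.zero_le i) he
        have helt : e < d := by omega
        refine Finset.mem_filter.mpr ⟨Nat.mem_properDivisors.mpr
          ⟨(Nat.mem_divisors.mp heT).1, by omega⟩, by simpa using helt⟩
      have : d - 1 ≤ ∑ e ∈ n.properDivisors.filter (· < d), e := by
        rw [hSsum] at *
        exact Finset.sum_le_sum_of_subset hSsub
      omega
  obtain ⟨S, hS, hSsum⟩ := complete_seq n.properDivisors key m (by omega)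
  exact ⟨S, hS, hSsum.symm⟩
end
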